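/- Let ρ be a convex metric on a convex set C. If f : C → ℝ is Frechet wa-differentiable at x ∈ C with differential A (a ρ-continuous affine functional with A(x) = 0 such that (f(x_n) − f(x) − A(x_n))/ρ(x_n,x) → 0 whenever ρ(x_n,x) → 0), then f is boundedly wa-differentiable at x: for every sequence t_n ↓ 0 and every ρ-bounded sequence y_n in C, (f((1−t_n)x + t_n y_n) − f(x))/t_n − A(y_n) → 0. -/

import Mathlib

open Set Filter Topology

/-- if `ρ` is a convex metric on `C` and `f` is Frechet wa-differentiable
at `x ∈ C` with differential `A` (a `ρ`-continuous affine functional with `A(x) = 0`),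
then `f` is boundedly wa-differentiable at `x`. -/
theorem stmt_19 {X : Type*} [AddCommGroup X] [Module ℝ X]
    (C : Set X) (hC : Convex ℝ C) (ρ : X → X → ℝ)
    (hρ0 : ∀ x ∈ C, ρ x x = 0)
    (hρeq : ∀ x ∈ C, ∀ y ∈ C, ρ x y = 0 → x = y)
    (hρsymm : ∀ x ∈ C, ∀ y ∈ C, ρ x y = ρ y x)
    (hρtri : ∀ x ∈ C, ∀ y ∈ C, ∀ z ∈ C, ρ x z ≤ ρ x y + ρ y z)
    (hρconv : ∀ x ∈ C, ∀ y₁ ∈ C, ∀ y₂ ∈ C, ∀ α ∈ Set.Icc (0:ℝ) 1,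
      ρ x (α • y₁ + (1 - α) • y₂) ≤ α * ρ x y₁ + (1 - α) * ρ x y₂)
    (f : X → ℝ) (x : X) (hx : x ∈ C) (A : X → ℝ)
    -- `A` is affine on `C`:
    (hAaff : ∀ y ∈ C, ∀ z ∈ C, ∀ t ∈ Set.Icc (0:ℝ) 1,
      A ((1 - t) • y + t • z) = (1 - t) * A y + t * A z)
    -- `A` is `ρ`-continuous on `C`:
    (hAcont : ∀ z ∈ C, ∀ zn : ℕ → X, (∀ n, zn n ∈ C) →
      Tendsto (fun n => ρ (zn n) z) atTop (𝓝 0) →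
      Tendsto (fun n => A (zn n)) atTop (𝓝 (A z)))
    (hAx : A x = 0)
    -- `f` is Frechet wa-differentiable at `x` with differential `A`:
    (hF : ∀ xn : ℕ → X, (∀ n, xn n ∈ C) →
      Tendsto (fun n => ρ (xn n) x) atTop (𝓝 0) →
      Tendsto (fun n => (f (xn n) - f x - A (xn n)) / ρ (xn n) x) atTop (𝓝 0)) :
    -- `f` is boundedly wa-differentiable at `x`:
    ∀ t : ℕ → ℝ, ∀ yn : ℕ → X,
      (∀ n, 0 < t n ∧ t n ≤ 1) → Tendsto t atTop (𝓝 0) →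
      (∀ n, yn n ∈ C) → (∃ M : ℝ, ∀ n, ρ (yn n) x ≤ M) →
      Tendsto (fun n => (f ((1 - t n) • x + t n • yn n) - f x) / t n - A (yn n))
        atTop (𝓝 0) := by
  intro t yn ht htend hyn ⟨M, hM⟩
  -- nonnegativity of ρ on C
  have hρnn : ∀ y ∈ C, 0 ≤ ρ y x := by
    intro y hy
    nlinarith [hρtri y hy x hx y hy, hρ0 y hy, hρsymm y hy x hx]
  have hMnn : 0 ≤ M := le_trans (hρnn _ (hyn 0)) (hM 0)
  set xn : ℕ → X := fun n => (1 - t n) • x + t n • yn n with hxn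
  have hmem : ∀ n, xn n ∈ C := fun n =>
    hC hx (hyn n) (by linarith [(ht n).1, (ht n).2]) (ht n).1.le (by ring)
  have hIcc : ∀ n, t n ∈ Set.Icc (0:ℝ) 1 := fun n => ⟨(ht n).1.le, (ht n).2⟩
  have hρb : ∀ n, ρ (xn n) x ≤ t n * ρ (yn n) x := by
    intro n
    have h1 := hρconv x hx (yn n) (hyn n) x hx (t n) (hIcc n)
    rw [add_comm] at h1
    calc ρ (xn n) x = ρ x (xn n) := hρsymm _ (hmem n) _ hx
      _ ≤ t n * ρ x (yn n) + (1 - t n) * ρ x x := h1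
      _ = t n * ρ (yn n) x := by
          rw [hρ0 x hx, hρsymm x hx (yn n) (hyn n)]; ring
  have hρto0 : Tendsto (fun n => ρ (xn n) x) atTop (𝓝 0) := by
    have h2 : Tendsto (fun n => t n * M) atTop (𝓝 0) := by
      simpa using htend.mul_const M
    refine squeeze_zero (fun n => hρnn _ (hmem n)) (fun n => ?_) h2
    exact le_trans (hρb n) (mul_le_mul_of_nonneg_left (hM n) (ht n).1.le)
  have hε := hF xn hmem hρto0
  set ε : ℕ → ℝ := fun n => (f (xn n) - f x - A (xn n)) / ρ (xn n) x with hεdef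
  have hA : ∀ n, A (xn n) = t n * A (yn n) := by
    intro n
    rw [hAaff x hx (yn n) (hyn n) (t n) (hIcc n), hAx]; ring
  have hkey : ∀ n, f (xn n) - f x - A (xn n) = ε n * ρ (xn n) x := by
    intro n
    rcases eq_or_ne (ρ (xn n) x) 0 with h0 | h0
    · have hxe : xn n = x := hρeq _ (hmem n) _ hx h0
      simp [hεdef, hxe, hAx]
    · show _ = (f (xn n) - f x - A (xn n)) / ρ (xn n) x * ρ (xn n) x
      rw [div_mul_cancel₀ _ h0]
  have hbound : ∀ n, |(f (xn n) - f x) / t n - A (yn n)| ≤ |ε n| * M := by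
    intro n
    have htn := (ht n).1
    have heq : (f (xn n) - f x) / t n - A (yn n) = ε n * (ρ (xn n) x / t n) := by
      have := hkey n
      have hfx : f (xn n) - f x = t n * A (yn n) + ε n * ρ (xn n) x := by
        rw [← hA n]; linarith
      field_simp [hfx, htn.ne']; linarith
    rw [heq, abs_mul]
    have h3 : |ρ (xn n) x / t n| ≤ M := by
      rw [abs_of_nonneg (div_nonneg (hρnn _ (hmem n)) htn.le)]
      rw [div_le_iff₀ htn]
      calc ρ (xn n) x ≤ t n * ρ (yn n) x := hρb n
        _ ≤ t n * M := mul_le_mul_of_nonneg_left (hM n) htn.le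
        _ = M * t n := mul_comm _ _
    exact mul_le_mul_of_nonneg_left h3 (abs_nonneg _)
  have hlim : Tendsto (fun n => |ε n| * M) atTop (𝓝 0) := by
    simpa using hε.abs.mul_const M
  exact squeeze_zero_norm hbound hlim
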